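/- Let n ≥ 2 and let λ₁,…,λₙ be real numbers with each λᵢ ≥ 0, not all zero. If Z_σ := |h|² - (1/n + σ)H² = 0 for some σ with 0 ≤ σ ≤ 1/(n(n-1)), where |h|² = Σλᵢ² and H = Σλᵢ and C = Σλᵢ³, then nC - (1 + nσ)H|h|² ≥ σ(1 + nσ)(1 - √(n(n-1)σ))H³. -/

import Mathlib

set_option maxHeartbeats 2000000 in
/-- If `Z_σ = |h|² - (1/n + σ)H² = 0` for nonnegative, not all zero curvatures and
`0 ≤ σ ≤ 1/(n(n-1))`, then `nC - (1+nσ)H|h|² ≥ σ(1+nσ)(1-√(n(n-1)σ))H³`. -/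
theorem stmt2 {n : ℕ} (hn : 2 ≤ n) (lam : Fin n → ℝ) (hpos : ∀ i, 0 ≤ lam i)
    (hne : lam ≠ 0) (σ : ℝ) (hσ0 : 0 ≤ σ) (hσ1 : σ ≤ 1 / ((n : ℝ) * ((n : ℝ) - 1)))
    (hZ : ∑ i, (lam i) ^ 2 - (1 / (n : ℝ) + σ) * (∑ i, lam i) ^ 2 = 0) :
    (n : ℝ) * (∑ i, (lam i) ^ 3)
        - (1 + (n : ℝ) * σ) * (∑ i, lam i) * (∑ i, (lam i) ^ 2)
      ≥ σ * (1 + (n : ℝ) * σ) * (1 - Real.sqrt ((n : ℝ) * ((n : ℝ) - 1) * σ))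
          * (∑ i, lam i) ^ 3 := by
  have hn2 : (2:ℝ) ≤ (n:ℝ) := by exact_mod_cast hn
  have hn0 : (n:ℝ) ≠ 0 := by linarith
  set H : ℝ := ∑ i, lam i with hHdef
  set Q : ℝ := ∑ i, (lam i)^2 with hQdef
  set C : ℝ := ∑ i, (lam i)^3 with hCdef
  have hH0 : 0 ≤ H := Finset.sum_nonneg fun i _ => hpos i
  have hQval : Q = (1/(n:ℝ) + σ) * H^2 := by linarith
  set t : ℝ := Real.sqrt σ with htdef
  set r : ℝ := Real.sqrt ((n:ℝ) * ((n:ℝ)-1)) with hrdef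
  have ht0 : 0 ≤ t := Real.sqrt_nonneg _
  have ht2 : t^2 = σ := Real.sq_sqrt hσ0
  have hnm : (0:ℝ) < (n:ℝ)*((n:ℝ)-1) := by nlinarith
  have hr2 : r^2 = (n:ℝ)*((n:ℝ)-1) := Real.sq_sqrt hnm.le
  have hr0 : 0 ≤ r := Real.sqrt_nonneg _
  have hs : Real.sqrt ((n:ℝ)*((n:ℝ)-1)*σ) = r*t := by
    rw [hrdef, htdef, ← Real.sqrt_mul hnm.le]
  clear_value t r
  set μ : Fin n → ℝ := fun i => lam i - H/(n:ℝ) with hmu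
  have hμ1 : ∑ i, μ i = 0 := by
    simp only [hmu, Finset.sum_sub_distrib, Finset.sum_const, Finset.card_univ,
      Fintype.card_fin, nsmul_eq_mul, ← hHdef]
    field_simp
    ring
  have hμ2 : ∑ i, (μ i)^2 = σ * H^2 := by
    have e : ∀ i ∈ Finset.univ, (μ i)^2
        = (lam i)^2 - (2*H/(n:ℝ))*lam i + (H/(n:ℝ))^2 := fun i _ => by
      simp only [hmu]; ring
    rw [Finset.sum_congr rfl e, Finset.sum_add_distrib, Finset.sum_sub_distrib,
      ← Finset.mul_sum, Finset.sum_const, Finset.card_univ, Fintype.card_fin,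
      nsmul_eq_mul, ← hQdef, ← hHdef, hQval]
    field_simp
    ring
  set S3 : ℝ := ∑ i, (μ i)^3 with hS3def
  have hC : (n:ℝ)*C - (1+(n:ℝ)*σ)*H*Q = (n:ℝ)*S3 + σ*(1-(n:ℝ)*σ)*H^3 := by
    have e : ∀ i ∈ Finset.univ, (μ i)^3
        = (lam i)^3 - (3*H/(n:ℝ))*(lam i)^2 + (3*H^2/(n:ℝ)^2)*lam i - (H/(n:ℝ))^3 :=
      fun i _ => by simp only [hmu]; ring
    have e2 : S3 = C - (3*H/(n:ℝ))*Q + (3*H^2/(n:ℝ)^2)*H - (n:ℝ)*(H/(n:ℝ))^3 := by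
      rw [hS3def, Finset.sum_congr rfl e, Finset.sum_sub_distrib, Finset.sum_add_distrib,
        Finset.sum_sub_distrib, ← Finset.mul_sum, ← Finset.mul_sum, Finset.sum_const,
        Finset.card_univ, Fintype.card_fin, nsmul_eq_mul, ← hCdef, ← hQdef, ← hHdef]
    rw [e2, hQval]
    field_simp
    ring
  clear_value H Q C μ S3
  -- pointwise Okumura-type bound
  have hlow : ∀ i, 0 ≤ (n:ℝ)*(μ i) + r*t*H := by
    intro i
    have h1 : μ i + ∑ j ∈ Finset.univ.erase i, μ j = ∑ j, μ j :=
      Finset.add_sum_erase _ μ (Finset.mem_univ i)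
    have h2 : (μ i)^2 + ∑ j ∈ Finset.univ.erase i, (μ j)^2 = σ*H^2 := by
      rw [← hμ2]; exact Finset.add_sum_erase _ (fun j => (μ j)^2) (Finset.mem_univ i)
    have hcs := sq_sum_le_card_mul_sum_sq (s := Finset.univ.erase i) (f := μ)
    have hce : (((Finset.univ.erase i).card : ℕ) : ℝ) = (n:ℝ) - 1 := by
      rw [Finset.card_erase_of_mem (Finset.mem_univ i), Finset.card_univ, Fintype.card_fin]
      have h1n : 1 ≤ n := by omega
      push_cast [Nat.cast_sub h1n]
      ring
    have hneg : ∑ j ∈ Finset.univ.erase i, μ j = - μ i := by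
      rw [hμ1] at h1; linarith
    rw [hce, hneg] at hcs
    -- hcs : (-μ i)^2 ≤ (n-1) * ∑ erase μ², and ∑ erase μ² = σH² - μᵢ²
    have hb : ((n:ℝ)*μ i)^2 ≤ (r*t*H)^2 := by
      have hrtH : (r*t*H)^2 = ((n:ℝ)*((n:ℝ)-1))*(σ*H^2) := by
        rw [mul_pow, mul_pow, hr2, ht2]; ring
      nlinarith [hcs, h2]
    have habs : |(n:ℝ)*μ i| ≤ r*t*H := by
      have h := Real.sqrt_le_sqrt hb
      rwa [Real.sqrt_sq_eq_abs, Real.sqrt_sq (by positivity : (0:ℝ) ≤ r*t*H)] at h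
    linarith [neg_abs_le ((n:ℝ)*μ i)]
  have hOk : 0 ≤ (n:ℝ)^3*((n:ℝ)-1)^2*S3
      + (n:ℝ)^2*((n:ℝ)-1)*(((n:ℝ)-1)-2)*(r*t^3*H^3) + (n:ℝ)*(r^3*t^3*H^3) := by
    have hterm : ∀ i ∈ Finset.univ,
        (0:ℝ) ≤ ((n:ℝ)*μ i + r*t*H) * ((n:ℝ)*((n:ℝ)-1)*μ i - r*t*H)^2 :=
      fun i _ => mul_nonneg (hlow i) (sq_nonneg _)
    have hsum := Finset.sum_nonneg hterm
    have e : ∀ i ∈ Finset.univ,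
        ((n:ℝ)*μ i + r*t*H) * ((n:ℝ)*((n:ℝ)-1)*μ i - r*t*H)^2
          = (n:ℝ)^3*((n:ℝ)-1)^2*(μ i)^3
            + ((n:ℝ)^2*((n:ℝ)-1)*(((n:ℝ)-1)-2)*(r*t*H))*(μ i)^2
            + ((n:ℝ)*(r*t*H)^2*(1-2*((n:ℝ)-1)))*(μ i) + (r*t*H)^3 :=
      fun i _ => by ring
    rw [Finset.sum_congr rfl e, Finset.sum_add_distrib, Finset.sum_add_distrib,
      Finset.sum_add_distrib, ← Finset.mul_sum, ← Finset.mul_sum, ← Finset.mul_sum,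
      Finset.sum_const, Finset.card_univ, Fintype.card_fin, nsmul_eq_mul,
      ← hS3def, hμ1, hμ2, ← ht2] at hsum
    calc (0:ℝ) ≤ _ := hsum
    _ = _ := by ring
  have hX : (n:ℝ)^2*((n:ℝ)-1)^2*(σ*(1-(n:ℝ)*σ) - σ*(1+(n:ℝ)*σ)*(1-r*t))*H^3
      - ((n:ℝ)^2*((n:ℝ)-1)*(((n:ℝ)-1)-2)*(r*t^3*H^3) + (n:ℝ)*(r^3*t^3*H^3))
      = (n:ℝ)^2*((n:ℝ)-1)*r*t^3*H^3*(1-r*t)^2 := by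
    rw [← ht2]
    linear_combination ((-(n:ℝ)*(1+(n:ℝ)*((n:ℝ)-1)*t^2)*r + 2*(n:ℝ)^2*((n:ℝ)-1)*t)*t^3*H^3) * hr2
  have hm0 : (0:ℝ) ≤ (n:ℝ) - 1 := by linarith
  have hXpos : (0:ℝ) ≤ (n:ℝ)^2*((n:ℝ)-1)*r*t^3*H^3*(1-r*t)^2 :=
    mul_nonneg (mul_nonneg (mul_nonneg (mul_nonneg
      (mul_nonneg (pow_nonneg (by linarith : (0:ℝ) ≤ (n:ℝ)) 2) hm0) hr0)
      (pow_nonneg ht0 3)) (pow_nonneg hH0 3)) (sq_nonneg _)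
  have hpos2 : (0:ℝ) < (n:ℝ)^2*((n:ℝ)-1)^2 := by nlinarith
  have hKexpr : (n:ℝ)^2*((n:ℝ)-1)^2
        * ((n:ℝ)*S3 + σ*(1-(n:ℝ)*σ)*H^3 - σ*(1+(n:ℝ)*σ)*(1-r*t)*H^3)
      = ((n:ℝ)^3*((n:ℝ)-1)^2*S3
          + (n:ℝ)^2*((n:ℝ)-1)*(((n:ℝ)-1)-2)*(r*t^3*H^3) + (n:ℝ)*(r^3*t^3*H^3))
        + ((n:ℝ)^2*((n:ℝ)-1)^2*(σ*(1-(n:ℝ)*σ) - σ*(1+(n:ℝ)*σ)*(1-r*t))*H^3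
          - ((n:ℝ)^2*((n:ℝ)-1)*(((n:ℝ)-1)-2)*(r*t^3*H^3) + (n:ℝ)*(r^3*t^3*H^3))) := by
    ring
  have h5 : 0 ≤ (n:ℝ)^2*((n:ℝ)-1)^2
      * ((n:ℝ)*S3 + σ*(1-(n:ℝ)*σ)*H^3 - σ*(1+(n:ℝ)*σ)*(1-r*t)*H^3) := by
    rw [hKexpr, hX]
    linarith [hOk, hXpos]
  have hG : 0 ≤ (n:ℝ)*S3 + σ*(1-(n:ℝ)*σ)*H^3 - σ*(1+(n:ℝ)*σ)*(1-r*t)*H^3 := by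
    nlinarith [h5, hpos2]
  rw [ge_iff_le, hs]
  linarith [hC, hG]
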